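/- For every nonzero integral ideal 𝔫 = 𝔫₀𝔫₁² of 𝒪, the 𝒩-transform of the arithmetic function 𝔪 ↦ log N(𝔪) satisfies 𝒩[log N](𝔫) = (∏_{v ∈ S(𝔫₁)∖S₂(𝔫)} (1 − q_v^{−2})) · (∏_{v ∈ S₂(𝔫)} (1 − (q_v² − q_v)^{−1})) · ( log N(𝔫) + Σ_{v ∈ S(𝔫₁)∖S₂(𝔫)} 2·log q_v/(q_v² − 1) + Σ_{v ∈ S₂(𝔫)} 2·log q_v/(q_v² − q_v − 1) ). -/

import Mathlib

set_option synthInstance.maxHeartbeats 1000000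
set_option maxHeartbeats 1000000
set_option linter.unusedSectionVars false
set_option linter.unusedVariables false


/- Statement 2 (Corollary `Findcor`): for a nonzero integral ideal `𝔫 = 𝔫₀𝔫₁²`,
   `𝒩[log N](𝔫) = (∏_{v∈S(𝔫₁)∖S₂(𝔫)} (1 − q_v^{−2})) (∏_{v∈S₂(𝔫)} (1 − (q_v²−q_v)^{−1}))
     · (log N(𝔫) + Σ_{v∈S(𝔫₁)∖S₂(𝔫)} 2 log q_v/(q_v²−1) + Σ_{v∈S₂(𝔫)} 2 log q_v/(q_v²−q_v−1))`. -/

open NumberField UniqueFactorizationMonoid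
open scoped Classical

namespace Stmt2

variable (F : Type*) [Field F] [NumberField F]

/-- `S(𝔪)`: the set of prime ideals dividing `𝔪`. -/
noncomputable def S (𝔪 : Ideal (𝓞 F)) : Finset (Ideal (𝓞 F)) :=
  (normalizedFactors 𝔪).toFinset

/-- `ord_v(𝔪)`: the exponent of the prime `v` in `𝔪`. -/
noncomputable def ordv (v 𝔪 : Ideal (𝓞 F)) : ℕ :=
  (normalizedFactors 𝔪).count v

/-- `S_k(𝔪) = {v ∈ S(𝔪) : ord_v(𝔪) = k}`. -/
noncomputable def Sk (k : ℕ) (𝔪 : Ideal (𝓞 F)) : Finset (Ideal (𝓞 F)) :=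
  (S F 𝔪).filter fun v => ordv F v 𝔪 = k

/-- `q_v`: the cardinality of the residue field `𝒪/𝔭_v`, as a real number. -/
noncomputable def qv (v : Ideal (𝓞 F)) : ℝ := (Ideal.absNorm v : ℝ)

/-- `ω_v(𝔠) = 1` if `v ∈ S(𝔠)`, and `(q_v+1)/(q_v−1)` otherwise. -/
noncomputable def omegav (v 𝔠 : Ideal (𝓞 F)) : ℝ :=
  if v ∈ S F 𝔠 then 1 else (qv F v + 1) / (qv F v - 1)

/-- The quotient ideal `𝔫𝔟⁻¹` when `𝔟 ∣ 𝔫` (junk value `0` otherwise). -/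
noncomputable def idealDiv (𝔫 𝔟 : Ideal (𝓞 F)) : Ideal (𝓞 F) :=
  if h : ∃ 𝔠, 𝔫 = 𝔟 * 𝔠 then h.choose else 0

/-- `𝔫₁`: the unique ideal with `𝔫 = 𝔫₀𝔫₁²`, `𝔫₀` squarefree. -/
noncomputable def nOne (𝔫 : Ideal (𝓞 F)) : Ideal (𝓞 F) :=
  ∏ v ∈ S F 𝔫, v ^ (ordv F v 𝔫 / 2)

/-- `𝔫₀`: the product of the primes occurring in `𝔫` with odd exponent. -/
noncomputable def nZero (𝔫 : Ideal (𝓞 F)) : Ideal (𝓞 F) :=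
  ∏ v ∈ S F 𝔫, v ^ (ordv F v 𝔫 % 2)

/-- `ι(𝔪) = ∏_{v∈S(𝔪)} (1+q_v)·q_v^{ord_v(𝔪)−1}`. -/
noncomputable def iota (𝔪 : Ideal (𝓞 F)) : ℝ :=
  ∏ v ∈ S F 𝔪, (1 + qv F v) * qv F v ^ (ordv F v 𝔪 - 1)

/-- The `𝒩`-transform of a real-valued arithmetic function `B`. -/
noncomputable def Ntrans (B : Ideal (𝓞 F) → ℝ) (𝔫 : Ideal (𝓞 F)) : ℝ :=
  ∑ I ∈ (S F (nOne F 𝔫)).powerset,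
    (-1 : ℝ) ^ I.card *
      (∏ v ∈ I ∩ Sk F 1 (nOne F 𝔫), omegav F v (nZero F 𝔫)) *
      (iota F (idealDiv F 𝔫 (∏ v ∈ I, v ^ 2)) / iota F 𝔫) *
      B (idealDiv F 𝔫 (∏ v ∈ I, v ^ 2))

variable {F}

/-! ### Basic lemmas -/

lemma mem_S_iff {v 𝔪 : Ideal (𝓞 F)} : v ∈ S F 𝔪 ↔ ordv F v 𝔪 ≠ 0 := by
  rw [S, Multiset.mem_toFinset, ordv, Ne, Multiset.count_eq_zero, not_not]

lemma prime_of_mem_S {v 𝔪 : Ideal (𝓞 F)} (hv : v ∈ S F 𝔪) : Prime v :=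
  prime_of_normalized_factor v (Multiset.mem_toFinset.mp hv)

lemma normalizedFactors_finset_prod_pow (s : Finset (Ideal (𝓞 F)))
    (hs : ∀ v ∈ s, Prime v) (e : Ideal (𝓞 F) → ℕ) :
    normalizedFactors (∏ v ∈ s, v ^ e v) = ∑ v ∈ s, (e v) • ({v} : Multiset (Ideal (𝓞 F))) := by
  classical
  induction s using Finset.induction_on with
  | empty => simp [← Ideal.one_eq_top, normalizedFactors_one]
  | @insert x s' hx ih =>
    have hxp : Prime x := hs x (Finset.mem_insert_self _ _)
    have hs' : ∀ v ∈ s', Prime v := fun v hv => hs v (Finset.mem_insert_of_mem hv)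
    have hprod : (∏ v ∈ s', v ^ e v) ≠ 0 := by
      apply Finset.prod_ne_zero_iff.mpr
      intro v hv
      exact pow_ne_zero _ (hs' v hv).ne_zero
    rw [Finset.prod_insert hx, Finset.sum_insert hx,
      normalizedFactors_mul (pow_ne_zero _ hxp.ne_zero) hprod, ih hs',
      normalizedFactors_pow, normalizedFactors_irreducible hxp.irreducible, normalize_eq]

lemma ordv_finset_prod_pow (s : Finset (Ideal (𝓞 F)))
    (hs : ∀ v ∈ s, Prime v) (e : Ideal (𝓞 F) → ℕ) (w : Ideal (𝓞 F)) :
    ordv F w (∏ v ∈ s, v ^ e v) = if w ∈ s then e w else 0 := by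
  rw [ordv, normalizedFactors_finset_prod_pow s hs e, Multiset.count_sum']
  simp only [Multiset.count_nsmul, Multiset.count_singleton]
  simp only [mul_ite, mul_one, mul_zero]
  exact Finset.sum_ite_eq s w e

lemma ordv_nOne (𝔫 w : Ideal (𝓞 F)) : ordv F w (nOne F 𝔫) = ordv F w 𝔫 / 2 := by
  rw [nOne, ordv_finset_prod_pow _ (fun v hv => prime_of_mem_S hv)]
  by_cases h : w ∈ S F 𝔫
  · simp [h]
  · have : ordv F w 𝔫 = 0 := by
      by_contra h'
      exact h (mem_S_iff.mpr h')
    simp [h, this]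

lemma ordv_nZero (𝔫 w : Ideal (𝓞 F)) : ordv F w (nZero F 𝔫) = ordv F w 𝔫 % 2 := by
  rw [nZero, ordv_finset_prod_pow _ (fun v hv => prime_of_mem_S hv)]
  by_cases h : w ∈ S F 𝔫
  · simp [h]
  · have : ordv F w 𝔫 = 0 := by
      by_contra h'
      exact h (mem_S_iff.mpr h')
    simp [h, this]

lemma mem_S_nOne {𝔫 w : Ideal (𝓞 F)} : w ∈ S F (nOne F 𝔫) ↔ 2 ≤ ordv F w 𝔫 := by
  rw [mem_S_iff, ordv_nOne, Ne, Nat.div_eq_zero_iff]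
  omega

lemma mem_S_nZero {𝔫 w : Ideal (𝓞 F)} : w ∈ S F (nZero F 𝔫) ↔ ordv F w 𝔫 % 2 = 1 := by
  rw [mem_S_iff, ordv_nZero, Ne]
  omega

lemma S_nOne_subset {𝔫 : Ideal (𝓞 F)} : S F (nOne F 𝔫) ⊆ S F 𝔫 := by
  intro w hw
  rw [mem_S_nOne] at hw
  rw [mem_S_iff]
  omega

lemma two_le_qv {v : Ideal (𝓞 F)} (hv : Prime v) : (2 : ℝ) ≤ qv F v := by
  have h2 : 2 ≤ Ideal.absNorm v := by
    rcases Nat.lt_or_ge (Ideal.absNorm v) 2 with h | h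
    · interval_cases h' : Ideal.absNorm v
      · exact absurd (Ideal.absNorm_eq_zero_iff.mp h') hv.ne_zero
      · exact absurd (Ideal.absNorm_eq_one_iff.mp h')
          (by simpa [Ideal.isUnit_iff] using hv.not_unit)
    · exact h
  rw [qv]; exact_mod_cast h2

lemma qv_pos {v : Ideal (𝓞 F)} (hv : Prime v) : (0 : ℝ) < qv F v :=
  lt_of_lt_of_le (by norm_num) (two_le_qv hv)


/-! ### Division facts -/

lemma idealDiv_spec {𝔫 𝔟 : Ideal (𝓞 F)} (h : 𝔟 ∣ 𝔫) : 𝔟 * idealDiv F 𝔫 𝔟 = 𝔫 := by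
  obtain ⟨𝔠, hc⟩ := h
  rw [idealDiv, dif_pos ⟨𝔠, hc⟩]
  exact (Exists.choose_spec (⟨𝔠, hc⟩ : ∃ 𝔠, 𝔫 = 𝔟 * 𝔠)).symm

section WithI

variable {𝔫 : Ideal (𝓞 F)} {I : Finset (Ideal (𝓞 F))}

lemma prime_of_mem_I (hI : I ⊆ S F (nOne F 𝔫)) {v : Ideal (𝓞 F)} (hv : v ∈ I) : Prime v :=
  prime_of_mem_S (S_nOne_subset (hI hv))

lemma prodI_ne_zero (hI : I ⊆ S F (nOne F 𝔫)) : (∏ v ∈ I, v ^ 2) ≠ 0 :=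
  Finset.prod_ne_zero_iff.mpr fun v hv => pow_ne_zero _ (prime_of_mem_I hI hv).ne_zero

lemma ordv_prodI (hI : I ⊆ S F (nOne F 𝔫)) (w : Ideal (𝓞 F)) :
    ordv F w (∏ v ∈ I, v ^ 2) = if w ∈ I then 2 else 0 :=
  ordv_finset_prod_pow I (fun v hv => prime_of_mem_I hI hv) (fun _ => 2) w

lemma prodI_dvd (h𝔫 : 𝔫 ≠ 0) (hI : I ⊆ S F (nOne F 𝔫)) : (∏ v ∈ I, v ^ 2) ∣ 𝔫 := by
  rw [dvd_iff_normalizedFactors_le_normalizedFactors (prodI_ne_zero hI) h𝔫,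
    Multiset.le_iff_count]
  intro w
  have := ordv_prodI hI w
  rw [ordv] at this
  rw [this]
  by_cases hw : w ∈ I
  · simp only [hw, if_true]
    have h2 : 2 ≤ ordv F w 𝔫 := mem_S_nOne.mp (hI hw)
    exact h2
  · simp [hw]

lemma ordv_idealDiv (h𝔫 : 𝔫 ≠ 0) (hI : I ⊆ S F (nOne F 𝔫)) (w : Ideal (𝓞 F)) :
    ordv F w (idealDiv F 𝔫 (∏ v ∈ I, v ^ 2)) =
      ordv F w 𝔫 - (if w ∈ I then 2 else 0) := by
  set 𝔪 := idealDiv F 𝔫 (∏ v ∈ I, v ^ 2) with h𝔪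
  have hmul : (∏ v ∈ I, v ^ 2) * 𝔪 = 𝔫 := idealDiv_spec (prodI_dvd h𝔫 hI)
  have h𝔪ne : 𝔪 ≠ 0 := by
    intro h0
    rw [h0, mul_zero] at hmul
    exact h𝔫 hmul.symm
  have := normalizedFactors_mul (prodI_ne_zero hI) h𝔪ne
  have hcount : ordv F w 𝔫 = ordv F w (∏ v ∈ I, v ^ 2) + ordv F w 𝔪 := by
    rw [ordv, ordv, ordv, ← hmul, this, Multiset.count_add]
  rw [hcount, ordv_prodI hI w]
  omega

lemma idealDiv_ne_zero (h𝔫 : 𝔫 ≠ 0) (hI : I ⊆ S F (nOne F 𝔫)) :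
    idealDiv F 𝔫 (∏ v ∈ I, v ^ 2) ≠ 0 := by
  intro h0
  have hmul : (∏ v ∈ I, v ^ 2) * idealDiv F 𝔫 (∏ v ∈ I, v ^ 2) = 𝔫 :=
    idealDiv_spec (prodI_dvd h𝔫 hI)
  rw [h0, mul_zero] at hmul
  exact h𝔫 hmul.symm

lemma absNorm_pos {𝔪 : Ideal (𝓞 F)} (h : 𝔪 ≠ 0) : (0 : ℝ) < (Ideal.absNorm 𝔪 : ℝ) := by
  have : Ideal.absNorm 𝔪 ≠ 0 := fun h0 => h (Ideal.absNorm_eq_zero_iff.mp h0)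
  positivity

lemma absNorm_finset_prod_sq (I : Finset (Ideal (𝓞 F))) :
    (Ideal.absNorm (∏ v ∈ I, v ^ 2) : ℝ) = ∏ v ∈ I, qv F v ^ 2 := by
  classical
  induction I using Finset.induction_on with
  | empty => simp [← Ideal.one_eq_top]
  | @insert x s hx ih =>
    rw [Finset.prod_insert hx, Finset.prod_insert hx, _root_.map_mul Ideal.absNorm,
      Nat.cast_mul, ih, show (x : Ideal (𝓞 F)) ^ 2 = x * x by ring,
      _root_.map_mul Ideal.absNorm, Nat.cast_mul, qv, sq]

lemma log_idealDiv (h𝔫 : 𝔫 ≠ 0) (hI : I ⊆ S F (nOne F 𝔫)) :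
    Real.log (Ideal.absNorm (idealDiv F 𝔫 (∏ v ∈ I, v ^ 2))) =
      Real.log (Ideal.absNorm 𝔫) - ∑ v ∈ I, 2 * Real.log (qv F v) := by
  set 𝔪 := idealDiv F 𝔫 (∏ v ∈ I, v ^ 2) with h𝔪
  have hmul : (∏ v ∈ I, v ^ 2) * 𝔪 = 𝔫 := idealDiv_spec (prodI_dvd h𝔫 hI)
  have h𝔪ne : 𝔪 ≠ 0 := idealDiv_ne_zero h𝔫 hI
  have hNP : (Ideal.absNorm (∏ v ∈ I, v ^ 2) : ℝ) = ∏ v ∈ I, qv F v ^ 2 :=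
    absNorm_finset_prod_sq I
  have hN : (Ideal.absNorm 𝔫 : ℝ) = (∏ v ∈ I, qv F v ^ 2) * (Ideal.absNorm 𝔪 : ℝ) := by
    rw [← hmul, _root_.map_mul Ideal.absNorm, Nat.cast_mul, hNP]
  have hqpos : ∀ v ∈ I, (0 : ℝ) < qv F v := fun v hv => qv_pos (prime_of_mem_I hI hv)
  have hprodpos : (0 : ℝ) < ∏ v ∈ I, qv F v ^ 2 :=
    Finset.prod_pos fun v hv => pow_pos (hqpos v hv) 2
  rw [hN, Real.log_mul (ne_of_gt hprodpos) (ne_of_gt (absNorm_pos h𝔪ne)),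
    Real.log_prod (fun v hv => ne_of_gt (pow_pos (hqpos v hv) 2))]
  have : ∀ v ∈ I, Real.log (qv F v ^ 2) = 2 * Real.log (qv F v) := fun v hv => by
    rw [Real.log_pow]; push_cast; ring
  rw [Finset.sum_congr rfl this]
  ring


/-! ### iota facts -/

lemma iota_pos (𝔪 : Ideal (𝓞 F)) : 0 < iota F 𝔪 := by
  rw [iota]
  apply Finset.prod_pos
  intro v hv
  have hq := qv_pos (prime_of_mem_S hv)
  positivity

lemma iota_idealDiv (h𝔫 : 𝔫 ≠ 0) (hI : I ⊆ S F (nOne F 𝔫)) :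
    iota F (idealDiv F 𝔫 (∏ v ∈ I, v ^ 2)) =
      iota F 𝔫 * ∏ v ∈ I,
        (if ordv F v 𝔫 = 2 then ((1 + qv F v) * qv F v)⁻¹ else (qv F v ^ 2)⁻¹) := by
  set 𝔪 := idealDiv F 𝔫 (∏ v ∈ I, v ^ 2) with h𝔪def
  have hord : ∀ w, ordv F w 𝔪 = ordv F w 𝔫 - (if w ∈ I then 2 else 0) :=
    ordv_idealDiv h𝔫 hI
  have hsub : S F 𝔪 ⊆ S F 𝔫 := by
    intro w hw
    rw [mem_S_iff] at hw ⊢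
    have := hord w
    omega
  have hIsub : I ⊆ S F 𝔫 := fun v hv => S_nOne_subset (hI hv)
  -- LHS as product over S F 𝔫
  have hL : iota F 𝔪 = ∏ v ∈ S F 𝔫,
      (if ordv F v 𝔪 = 0 then 1 else (1 + qv F v) * qv F v ^ (ordv F v 𝔪 - 1)) := by
    rw [iota]
    have step : (∏ v ∈ S F 𝔪, (1 + qv F v) * qv F v ^ (ordv F v 𝔪 - 1)) =
        ∏ v ∈ S F 𝔪, (if ordv F v 𝔪 = 0 then 1 else (1 + qv F v) * qv F v ^ (ordv F v 𝔪 - 1)) :=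
      Finset.prod_congr rfl (fun v hv => by rw [if_neg (mem_S_iff.mp hv)])
    rw [step]
    exact Finset.prod_subset hsub (fun x _ hx => by
      rw [if_pos]
      by_contra h
      exact hx (mem_S_iff.mpr h))
  have hR : (∏ v ∈ I,
        (if ordv F v 𝔫 = 2 then ((1 + qv F v) * qv F v)⁻¹ else (qv F v ^ 2)⁻¹)) =
      ∏ v ∈ S F 𝔫, (if v ∈ I then
        (if ordv F v 𝔫 = 2 then ((1 + qv F v) * qv F v)⁻¹ else (qv F v ^ 2)⁻¹) else 1) := by
    rw [← Finset.prod_filter]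
    apply Finset.prod_congr _ (fun _ _ => rfl)
    ext v
    simp only [Finset.mem_filter]
    exact ⟨fun h => ⟨hIsub h, h⟩, fun h => h.2⟩
  rw [hL, hR, iota, ← Finset.prod_mul_distrib]
  apply Finset.prod_congr rfl
  intro v hv
  have hq2 : (2 : ℝ) ≤ qv F v := two_le_qv (prime_of_mem_S hv)
  have hq0 : qv F v ≠ 0 := by linarith
  have hq1 : (1 : ℝ) + qv F v ≠ 0 := by linarith
  have hvord : ordv F v 𝔫 ≠ 0 := mem_S_iff.mp hv
  by_cases hvI : v ∈ I
  · have h2 : 2 ≤ ordv F v 𝔫 := mem_S_nOne.mp (hI hvI)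
    rw [if_pos hvI, hord v, if_pos hvI]
    by_cases he : ordv F v 𝔫 = 2
    · rw [if_pos he, he]
      norm_num
      field_simp
    · rw [if_neg he]
      have h3 : 3 ≤ ordv F v 𝔫 := by omega
      rw [if_neg (by omega : ¬ ordv F v 𝔫 - 2 = 0)]
      have hexp : ordv F v 𝔫 - 1 = (ordv F v 𝔫 - 2 - 1) + 2 := by omega
      rw [hexp, pow_add]
      field_simp
  · rw [if_neg hvI, hord v, if_neg hvI, Nat.sub_zero, if_neg hvord, mul_one]


/-! ### Term evaluation -/

noncomputable def cfun (𝔫 v : Ideal (𝓞 F)) : ℝ :=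
  if ordv F v 𝔫 = 2 then -(qv F v ^ 2 - qv F v)⁻¹ else -(qv F v ^ 2)⁻¹

lemma mem_Sk1_nOne {𝔫 v : Ideal (𝓞 F)} :
    v ∈ Sk F 1 (nOne F 𝔫) ↔ ordv F v 𝔫 / 2 = 1 := by
  rw [Sk, Finset.mem_filter, ordv_nOne, mem_S_nOne]
  constructor
  · exact fun h => h.2
  · intro h
    exact ⟨by omega, h⟩

lemma term_eval (h𝔫 : 𝔫 ≠ 0) (hI : I ⊆ S F (nOne F 𝔫)) :
    (-1 : ℝ) ^ I.card *
      (∏ v ∈ I ∩ Sk F 1 (nOne F 𝔫), omegav F v (nZero F 𝔫)) *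
      (iota F (idealDiv F 𝔫 (∏ v ∈ I, v ^ 2)) / iota F 𝔫) *
      Real.log (Ideal.absNorm (idealDiv F 𝔫 (∏ v ∈ I, v ^ 2))) =
    (∏ v ∈ I, cfun 𝔫 v) *
      (Real.log (Ideal.absNorm 𝔫) - ∑ v ∈ I, 2 * Real.log (qv F v)) := by
  have hiota : iota F (idealDiv F 𝔫 (∏ v ∈ I, v ^ 2)) / iota F 𝔫 =
      ∏ v ∈ I, (if ordv F v 𝔫 = 2 then ((1 + qv F v) * qv F v)⁻¹ else (qv F v ^ 2)⁻¹) := by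
    rw [iota_idealDiv h𝔫 hI, mul_comm, mul_div_assoc, div_self (ne_of_gt (iota_pos 𝔫)),
      mul_one]
  rw [hiota, log_idealDiv h𝔫 hI]
  have homega : (∏ v ∈ I ∩ Sk F 1 (nOne F 𝔫), omegav F v (nZero F 𝔫)) =
      ∏ v ∈ I, (if v ∈ Sk F 1 (nOne F 𝔫) then omegav F v (nZero F 𝔫) else 1) := by
    rw [← Finset.prod_filter]
    apply Finset.prod_congr _ (fun _ _ => rfl)
    ext w
    simp only [Finset.mem_inter, Finset.mem_filter]
  have hsign : (-1 : ℝ) ^ I.card = ∏ _v ∈ I, (-1 : ℝ) := (Finset.prod_const _).symm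
  rw [homega, hsign, ← Finset.prod_mul_distrib, ← Finset.prod_mul_distrib]
  congr 1
  apply Finset.prod_congr rfl
  intro v hv
  have hq2 : (2 : ℝ) ≤ qv F v := two_le_qv (prime_of_mem_I hI hv)
  have hq0 : qv F v ≠ 0 := by linarith
  have hq1 : (1 : ℝ) + qv F v ≠ 0 := by linarith
  have hqm1 : qv F v - 1 ≠ 0 := by intro h; nlinarith
  have h2 : 2 ≤ ordv F v 𝔫 := mem_S_nOne.mp (hI hv)
  rw [cfun]
  by_cases he : ordv F v 𝔫 = 2
  · have hSk : v ∈ Sk F 1 (nOne F 𝔫) := mem_Sk1_nOne.mpr (by omega)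
    have hnz : v ∉ S F (nZero F 𝔫) := by
      rw [mem_S_nZero]
      omega
    rw [if_pos he, if_pos hSk, omegav, if_neg hnz, if_pos he]
    have hd : qv F v ^ 2 - qv F v ≠ 0 := by nlinarith
    field_simp
    ring
  · rw [if_neg he, if_neg he]
    have homega1 : (if v ∈ Sk F 1 (nOne F 𝔫) then omegav F v (nZero F 𝔫) else 1) = 1 := by
      by_cases hSk : v ∈ Sk F 1 (nOne F 𝔫)
      · have h3 : ordv F v 𝔫 = 3 := by
          have := mem_Sk1_nOne.mp hSk
          omega
        have hnz : v ∈ S F (nZero F 𝔫) := by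
          rw [mem_S_nZero]
          omega
        rw [if_pos hSk, omegav, if_pos hnz]
      · rw [if_neg hSk]
    rw [homega1]
    ring

/-! ### Powerset sum lemma -/

lemma prod_one_add {ι : Type*} [DecidableEq ι] (T : Finset ι) (c : ι → ℝ) :
    ∑ I ∈ T.powerset, ∏ v ∈ I, c v = ∏ v ∈ T, (1 + c v) := by
  have h := Finset.prod_add c (fun _ => (1 : ℝ)) T
  simp only [Finset.prod_const_one, mul_one] at h
  rw [← h]
  apply Finset.prod_congr rfl
  intro v _
  ring

lemma sum_powerset_linear {ι : Type*} [DecidableEq ι] (T : Finset ι) (c a : ι → ℝ) (L : ℝ) :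
    ∑ I ∈ T.powerset, (∏ v ∈ I, c v) * (L - ∑ v ∈ I, a v) =
      (∏ v ∈ T, (1 + c v)) * L -
        ∑ v ∈ T, a v * c v * ∏ w ∈ T.erase v, (1 + c w) := by
  classical
  induction T using Finset.induction_on with
  | empty => simp
  | @insert x s hx ih =>
    rw [Finset.sum_powerset_insert hx]
    have key : ∀ I ∈ s.powerset, (∏ v ∈ insert x I, c v) * (L - ∑ v ∈ insert x I, a v)
        = c x * ((∏ v ∈ I, c v) * (L - ∑ v ∈ I, a v)) - c x * a x * ∏ v ∈ I, c v := by
      intro I hIs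
      have hxI : x ∉ I := fun h => hx (Finset.mem_powerset.mp hIs h)
      rw [Finset.prod_insert hxI, Finset.sum_insert hxI]
      ring
    rw [Finset.sum_congr rfl key, Finset.sum_sub_distrib, ← Finset.mul_sum, ← Finset.mul_sum,
      ih, prod_one_add]
    have herase : ∑ v ∈ insert x s, a v * c v * ∏ w ∈ (insert x s).erase v, (1 + c w)
        = a x * c x * ∏ w ∈ s, (1 + c w)
          + (1 + c x) * ∑ v ∈ s, a v * c v * ∏ w ∈ s.erase v, (1 + c w) := by
      rw [Finset.sum_insert hx, Finset.erase_insert hx, Finset.mul_sum]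
      congr 1
      apply Finset.sum_congr rfl
      intro v hv
      have hvx : v ≠ x := fun h => hx (h ▸ hv)
      rw [Finset.erase_insert_of_ne hvx.symm,
        Finset.prod_insert (fun h => hx (Finset.mem_of_mem_erase h))]
      ring
    rw [herase, Finset.prod_insert hx]
    ring

end WithI

variable (F)

theorem statement2
    (hF : ∀ v : NumberField.InfinitePlace F, v.IsReal)
    (𝔫 : Ideal (𝓞 F)) (h𝔫 : 𝔫 ≠ 0) :
    Ntrans F (fun 𝔪 => Real.log (Ideal.absNorm 𝔪)) 𝔫 =
      (∏ v ∈ S F (nOne F 𝔫) \ Sk F 2 𝔫, (1 - (qv F v) ^ (-2 : ℤ))) *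
      (∏ v ∈ Sk F 2 𝔫, (1 - ((qv F v) ^ 2 - qv F v)⁻¹)) *
      (Real.log (Ideal.absNorm 𝔫) +
        (∑ v ∈ S F (nOne F 𝔫) \ Sk F 2 𝔫, 2 * Real.log (qv F v) / ((qv F v) ^ 2 - 1)) +
        (∑ v ∈ Sk F 2 𝔫, 2 * Real.log (qv F v) / ((qv F v) ^ 2 - qv F v - 1))) := by

  classical
  have hS2T : Sk F 2 𝔫 ⊆ S F (nOne F 𝔫) := by
    intro v hv
    rw [Sk, Finset.mem_filter] at hv
    exact mem_S_nOne.mpr (by omega)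
  have hstep1 : Ntrans F (fun 𝔪 => Real.log (Ideal.absNorm 𝔪)) 𝔫 =
      ∑ I ∈ (S F (nOne F 𝔫)).powerset, (∏ v ∈ I, cfun 𝔫 v) *
        (Real.log (Ideal.absNorm 𝔫) - ∑ v ∈ I, 2 * Real.log (qv F v)) := by
    rw [Ntrans]
    apply Finset.sum_congr rfl
    intro I hI
    exact term_eval h𝔫 (Finset.mem_powerset.mp hI)
  rw [hstep1, sum_powerset_linear]
  set T := S F (nOne F 𝔫) with hT
  -- basic per-prime facts
  have hq : ∀ v ∈ T, (2 : ℝ) ≤ qv F v := fun v hv =>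
    two_le_qv (prime_of_mem_S (S_nOne_subset hv))
  have hordne : ∀ v ∈ T \ Sk F 2 𝔫, ordv F v 𝔫 ≠ 2 := by
    intro v hv
    rw [Finset.mem_sdiff] at hv
    intro he
    apply hv.2
    rw [Sk, Finset.mem_filter]
    exact ⟨mem_S_iff.mpr (by omega), he⟩
  have hc2 : ∀ v ∈ Sk F 2 𝔫, cfun 𝔫 v = -(qv F v ^ 2 - qv F v)⁻¹ := by
    intro v hv
    rw [Sk, Finset.mem_filter] at hv
    rw [cfun, if_pos hv.2]
  have hcne2 : ∀ v ∈ T \ Sk F 2 𝔫, cfun 𝔫 v = -(qv F v ^ 2)⁻¹ := by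
    intro v hv
    rw [cfun, if_neg (hordne v hv)]
  -- the product over T
  have hprod : ∏ v ∈ T, (1 + cfun 𝔫 v) =
      (∏ v ∈ T \ Sk F 2 𝔫, (1 - (qv F v) ^ (-2 : ℤ))) *
      (∏ v ∈ Sk F 2 𝔫, (1 - ((qv F v) ^ 2 - qv F v)⁻¹)) := by
    rw [← Finset.prod_sdiff hS2T]
    congr 1
    · apply Finset.prod_congr rfl
      intro v hv
      rw [hcne2 v hv, show ((-2 : ℤ)) = -((2 : ℕ) : ℤ) by norm_num, zpow_neg, zpow_natCast]
      ring
    · apply Finset.prod_congr rfl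
      intro v hv
      rw [hc2 v hv]
      ring
  -- the sum over T
  have hsum : ∑ v ∈ T, (2 * Real.log (qv F v)) * cfun 𝔫 v * ∏ w ∈ T.erase v, (1 + cfun 𝔫 w) =
      -(∏ v ∈ T, (1 + cfun 𝔫 v)) *
        ((∑ v ∈ T \ Sk F 2 𝔫, 2 * Real.log (qv F v) / ((qv F v) ^ 2 - 1)) +
         (∑ v ∈ Sk F 2 𝔫, 2 * Real.log (qv F v) / ((qv F v) ^ 2 - qv F v - 1))) := by
    have key : ∀ v ∈ T, (2 * Real.log (qv F v)) * cfun 𝔫 v * ∏ w ∈ T.erase v, (1 + cfun 𝔫 w)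
        = -(∏ w ∈ T, (1 + cfun 𝔫 w)) *
          (if ordv F v 𝔫 = 2 then 2 * Real.log (qv F v) / ((qv F v) ^ 2 - qv F v - 1)
           else 2 * Real.log (qv F v) / ((qv F v) ^ 2 - 1)) := by
      intro v hv
      rw [← Finset.mul_prod_erase T _ hv]
      have hq2 := hq v hv
      have hx1 : qv F v ^ 2 - qv F v - 1 ≠ 0 := by nlinarith
      have hx2 : qv F v ^ 2 - qv F v ≠ 0 := by nlinarith
      have hy1 : qv F v ^ 2 - 1 ≠ 0 := by nlinarith
      have hy2 : qv F v ^ 2 ≠ 0 := by nlinarith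
      have hgoal : (2 * Real.log (qv F v)) * cfun 𝔫 v =
          -(1 + cfun 𝔫 v) *
          (if ordv F v 𝔫 = 2 then 2 * Real.log (qv F v) / ((qv F v) ^ 2 - qv F v - 1)
           else 2 * Real.log (qv F v) / ((qv F v) ^ 2 - 1)) := by
        rw [cfun]
        by_cases he : ordv F v 𝔫 = 2
        · rw [if_pos he, if_pos he]
          rw [div_eq_mul_inv]
          have hb := mul_inv_cancel₀ hx1
          have ha := mul_inv_cancel₀ hx2
          linear_combination (2 * Real.log (qv F v) * (qv F v ^ 2 - qv F v)⁻¹) * hb -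
            (2 * Real.log (qv F v) * (qv F v ^ 2 - qv F v - 1)⁻¹) * ha
        · rw [if_neg he, if_neg he]
          field_simp
          ring
      calc (2 * Real.log (qv F v)) * cfun 𝔫 v * ∏ w ∈ T.erase v, (1 + cfun 𝔫 w)
          = ((2 * Real.log (qv F v)) * cfun 𝔫 v) * ∏ w ∈ T.erase v, (1 + cfun 𝔫 w) := by ring
        _ = _ := by rw [hgoal]; ring
    rw [Finset.sum_congr rfl key, ← Finset.mul_sum]
    congr 1
    rw [← Finset.sum_sdiff hS2T]
    congr 1
    · apply Finset.sum_congr rfl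
      intro v hv
      rw [if_neg (hordne v hv)]
    · apply Finset.sum_congr rfl
      intro v hv
      rw [Sk, Finset.mem_filter] at hv
      rw [if_pos hv.2]
  rw [hsum, hprod]
  ring


end Stmt2
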